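/- (Maximum principle / DASM for hyperboloids.) Let κ > 1, X₀ = (x⁰, x⁰_{n+1}) ∈ ℝ^{n+1}, and λ ∈ (0,1). Let v̄, v̂ ∈ ℝⁿ satisfy (κ²−1)|v̄|² < 1 and (κ²−1)|v̂|² < 1, set v_λ = (1−λ)v̄ + λv̂, and let s̄, ŝ, s_λ > 0. Define Ȳ = X₀ + s̄Λ(v̄), Ŷ = X₀ + ŝΛ(v̂), Y_λ = X₀ + s_λΛ(v_λ), and H̄ = s̄Q(v̄), Ĥ = ŝQ(v̂), H_λ = s_λQ(v_λ). Assume the concavity inequality H_λ((1−λ)Ĥ + λH̄) ≤ H̄Ĥ. Then for every X = (x, x_{n+1}) ∈ ℝ^{n+1} with κ(x_{n+1} − x⁰_{n+1}) ≤ min{s̄, ŝ}: if c(X, Y_λ) ≥ c(X₀, Y_λ), then c(X, Ȳ) ≥ c(X₀, Ȳ) or c(X, Ŷ) ≥ c(X₀, Ŷ). In other words, the region {X : c(X,Y_λ) ≥ c(X₀,Y_λ)} (intersected with {κ(x_{n+1}−x⁰_{n+1}) ≤ min{s̄,ŝ}}) is contained in the union of the corresponding regions for Ȳ and Ŷ.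 -/
import Mathlib


noncomputable section

open scoped RealInnerProductSpace

/-- ℝⁿ with the Euclidean norm. -/
abbrev E (n : ℕ) : Type := EuclideanSpace ℝ (Fin n)

/-- Euclidean norm of a point of ℝ^{n+1} = ℝⁿ × ℝ. -/
def pnorm {n : ℕ} (W : E n × ℝ) : ℝ := Real.sqrt (‖W.1‖ ^ 2 + W.2 ^ 2)

/-- c(X,Y) = κ(y_{n+1} − x_{n+1}) − |X − Y|. -/
def cfun {n : ℕ} (κ : ℝ) (X Y : E n × ℝ) : ℝ := κ * (Y.2 - X.2) - pnorm (X - Y)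

/-- φ_{Y,b}(x): lower sheet of the two-sheeted hyperboloid with upper focus Y. -/
def hypb {n : ℕ} (κ : ℝ) (Y : E n × ℝ) (b : ℝ) (x : E n) : ℝ :=
  Y.2 - κ * b / (κ ^ 2 - 1) -
    Real.sqrt (b ^ 2 / (κ ^ 2 - 1) ^ 2 + ‖x - Y.1‖ ^ 2 / (κ ^ 2 - 1))

/-- φ(x, Y, X₀) = φ_{Y, c(X₀,Y)}(x). -/
def hyp {n : ℕ} (κ : ℝ) (x : E n) (Y X₀ : E n × ℝ) : ℝ := hypb κ Y (cfun κ X₀ Y) x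

/-- Q(v) = (κ − √(1 − (κ²−1)|v|²))/(1 + |v|²). -/
def Qf {n : ℕ} (κ : ℝ) (v : E n) : ℝ :=
  (κ - Real.sqrt (1 - (κ ^ 2 - 1) * ‖v‖ ^ 2)) / (1 + ‖v‖ ^ 2)

/-- Λ(v) = (Q(v)v, −Q(v) + κ), the refracted unit direction. -/
def Λf {n : ℕ} (κ : ℝ) (v : E n) : E n × ℝ := (Qf κ v • v, κ - Qf κ v)

lemma pnorm_nonneg' {n} (W : E n × ℝ) : 0 ≤ pnorm W := Real.sqrt_nonneg _

lemma pnorm_sq' {n} (W : E n × ℝ) : pnorm W ^ 2 = ‖W.1‖ ^ 2 + W.2 ^ 2 := by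
  rw [pnorm, Real.sq_sqrt]; positivity

lemma Q_unit {n} {κ : ℝ} (hκ : 1 < κ) {v : E n} (hv : (κ ^ 2 - 1) * ‖v‖ ^ 2 < 1) :
    (Qf κ v) ^ 2 * ‖v‖ ^ 2 + (Qf κ v - κ) ^ 2 = 1 := by
  have hD : 0 ≤ 1 - (κ ^ 2 - 1) * ‖v‖ ^ 2 := by linarith
  have hs : Real.sqrt (1 - (κ ^ 2 - 1) * ‖v‖ ^ 2) ^ 2 = 1 - (κ ^ 2 - 1) * ‖v‖ ^ 2 :=
    Real.sq_sqrt hD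
  have h1 : (1 + ‖v‖ ^ 2) ≠ 0 := by positivity
  set S := Real.sqrt (1 - (κ ^ 2 - 1) * ‖v‖ ^ 2) with hS
  rw [Qf, ← hS]
  field_simp
  linear_combination (1 + ‖v‖ ^ 2) * hs

lemma Q_pos {n} {κ : ℝ} (hκ : 1 < κ) (v : E n) : 0 < Qf κ v := by
  have h1 : Real.sqrt (1 - (κ ^ 2 - 1) * ‖v‖ ^ 2) ≤ 1 := by
    refine Real.sqrt_le_one.mpr ?_
    nlinarith [mul_nonneg (by nlinarith : (0:ℝ) ≤ κ ^ 2 - 1) (sq_nonneg ‖v‖)]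
  have : 0 < κ - Real.sqrt (1 - (κ ^ 2 - 1) * ‖v‖ ^ 2) := by linarith
  exact div_pos this (by positivity)

lemma sub_comp {n} (X₀ X : E n × ℝ) (κ s : ℝ) (v : E n) :
    X - (X₀ + s • Λf κ v)
      = (X.1 - X₀.1 - (s * Qf κ v) • v, X.2 - X₀.2 - s * (κ - Qf κ v)) := by
  ext
  · simp [Λf, smul_smul, sub_add_eq_sub_sub]
  · simp [Λf, smul_eq_mul, sub_add_eq_sub_sub]

lemma pnorm_sub_sq {n} {κ : ℝ} (hκ : 1 < κ) (X₀ X : E n × ℝ) {v : E n}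
    (hv : (κ ^ 2 - 1) * ‖v‖ ^ 2 < 1) (s : ℝ) :
    pnorm (X - (X₀ + s • Λf κ v)) ^ 2
      = (s - κ * (X.2 - X₀.2)) ^ 2 + (‖X.1 - X₀.1‖ ^ 2 - (κ ^ 2 - 1) * (X.2 - X₀.2) ^ 2
          - 2 * s * Qf κ v * (⟪X.1 - X₀.1, v⟫ - (X.2 - X₀.2))) := by
  rw [sub_comp, pnorm_sq']
  simp only
  rw [norm_sub_sq_real, real_inner_smul_right, norm_smul, Real.norm_eq_abs, mul_pow, sq_abs]
  linear_combination (s ^ 2) * Q_unit hκ hv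

lemma cond_iff {n} {κ : ℝ} (hκ : 1 < κ) (X₀ X : E n × ℝ) {v : E n}
    (hv : (κ ^ 2 - 1) * ‖v‖ ^ 2 < 1) {s : ℝ} (hs : 0 < s) :
    cfun κ X₀ (X₀ + s • Λf κ v) ≤ cfun κ X (X₀ + s • Λf κ v) ↔
      (κ * (X.2 - X₀.2) ≤ s ∧
       ‖X.1 - X₀.1‖ ^ 2 - (κ ^ 2 - 1) * (X.2 - X₀.2) ^ 2
         ≤ 2 * s * Qf κ v * (⟪X.1 - X₀.1, v⟫ - (X.2 - X₀.2))) := by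
  have h0sq := pnorm_sub_sq hκ X₀ X₀ hv s
  simp only [sub_self, inner_zero_left, mul_zero, sub_zero, zero_sub, neg_zero,
    ne_eq, OfNat.ofNat_ne_zero, not_false_eq_true, zero_pow, mul_zero, sub_zero, norm_zero, add_zero] at h0sq
  have h0 : pnorm (X₀ - (X₀ + s • Λf κ v)) = s := by
    rw [← Real.sqrt_sq (pnorm_nonneg' _), h0sq, Real.sqrt_sq hs.le]
  have hsq := pnorm_sub_sq hκ X₀ X hv s
  have hp0 := pnorm_nonneg' (X - (X₀ + s • Λf κ v))
  unfold cfun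
  constructor
  · intro h
    have hp : pnorm (X - (X₀ + s • Λf κ v)) ≤ s - κ * (X.2 - X₀.2) := by
      rw [h0] at h; nlinarith
    have ht : κ * (X.2 - X₀.2) ≤ s := by linarith
    refine ⟨ht, ?_⟩
    nlinarith [hsq, hp, hp0]
  · rintro ⟨h1, h2⟩
    have hle : pnorm (X - (X₀ + s • Λf κ v)) ^ 2 ≤ (s - κ * (X.2 - X₀.2)) ^ 2 := by
      rw [hsq]; linarith
    have hp : pnorm (X - (X₀ + s • Λf κ v)) ≤ s - κ * (X.2 - X₀.2) := by
      have := Real.sqrt_le_sqrt hle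
      rwa [Real.sqrt_sq hp0, Real.sqrt_sq (by linarith)] at this
    rw [h0] at *
    nlinarith [hp]

lemma key_identity {n} (κ : ℝ) (w v : E n) (u : ℝ) {Q : ℝ}
    (hUnit : Q ^ 2 * ‖v‖ ^ 2 + (Q - κ) ^ 2 = 1) :
    ‖w‖ ^ 2 - (κ ^ 2 - 1) * u ^ 2 - 2 * (κ * u) * Q * (⟪w, v⟫ - u)
      = ‖w - (κ * Q * u) • v‖ ^ 2 + (u * (κ * (κ - Q) - 1)) ^ 2 := by
  rw [norm_sub_sq_real, real_inner_smul_right, norm_smul, Real.norm_eq_abs, mul_pow, sq_abs]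
  linear_combination (-(κ ^ 2 * u ^ 2)) * hUnit

set_option maxHeartbeats 1000000 in
/-- maximum principle (DASM) for hyperboloids under the concavity
inequality expressing condition (AW) along the segment [v̄, v̂]. -/
theorem stmt_12 {n : ℕ} (hn : 1 ≤ n) (κ : ℝ) (hκ : 1 < κ)
    (X₀ : E n × ℝ) (lam : ℝ) (hlam : lam ∈ Set.Ioo (0:ℝ) 1)
    (vb vh : E n) (hvb : (κ ^ 2 - 1) * ‖vb‖ ^ 2 < 1) (hvh : (κ ^ 2 - 1) * ‖vh‖ ^ 2 < 1)
    (sb sh sl : ℝ) (hsb : 0 < sb) (hsh : 0 < sh) (hsl : 0 < sl)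
    (hconc : (sl * Qf κ ((1 - lam) • vb + lam • vh)) *
        ((1 - lam) * (sh * Qf κ vh) + lam * (sb * Qf κ vb))
      ≤ (sb * Qf κ vb) * (sh * Qf κ vh))
    (X : E n × ℝ) (hX : κ * (X.2 - X₀.2) ≤ min sb sh)
    (hXl : cfun κ X₀ (X₀ + sl • Λf κ ((1 - lam) • vb + lam • vh))
        ≤ cfun κ X (X₀ + sl • Λf κ ((1 - lam) • vb + lam • vh))) :
    cfun κ X₀ (X₀ + sb • Λf κ vb) ≤ cfun κ X (X₀ + sb • Λf κ vb) ∨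
    cfun κ X₀ (X₀ + sh • Λf κ vh) ≤ cfun κ X (X₀ + sh • Λf κ vh) := by
  obtain ⟨hl0, hl1⟩ := hlam
  have hk1 : (0:ℝ) < κ ^ 2 - 1 := by nlinarith
  set vl : E n := (1 - lam) • vb + lam • vh with hvldef
  have hvl : (κ ^ 2 - 1) * ‖vl‖ ^ 2 < 1 := by
    have hnl : ‖vl‖ ≤ (1 - lam) * ‖vb‖ + lam * ‖vh‖ := by
      calc ‖vl‖ ≤ ‖(1 - lam) • vb‖ + ‖lam • vh‖ := norm_add_le _ _
        _ = (1 - lam) * ‖vb‖ + lam * ‖vh‖ := by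
            rw [norm_smul, norm_smul, Real.norm_eq_abs, Real.norm_eq_abs,
              abs_of_nonneg (by linarith), abs_of_nonneg hl0.le]
    have c1 : ‖vl‖ ^ 2 ≤ ((1 - lam) * ‖vb‖ + lam * ‖vh‖) ^ 2 :=
      pow_le_pow_left₀ (norm_nonneg vl) hnl 2
    have c2 : ((1 - lam) * ‖vb‖ + lam * ‖vh‖) ^ 2
        ≤ (1 - lam) * ‖vb‖ ^ 2 + lam * ‖vh‖ ^ 2 := by
      nlinarith [mul_nonneg (mul_nonneg hl0.le (by linarith : (0:ℝ) ≤ 1 - lam))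
        (sq_nonneg (‖vb‖ - ‖vh‖))]
    have c3 : (κ ^ 2 - 1) * ‖vl‖ ^ 2
        ≤ (κ ^ 2 - 1) * ((1 - lam) * ‖vb‖ ^ 2 + lam * ‖vh‖ ^ 2) :=
      mul_le_mul_of_nonneg_left (c1.trans c2) hk1.le
    have c4 := mul_lt_mul_of_pos_left hvb (by linarith : (0:ℝ) < 1 - lam)
    have c5 := mul_lt_mul_of_pos_left hvh hl0
    linarith [c3, c4, c5]
  clear_value vl
  have hQb := Q_pos hκ vb
  have hQh := Q_pos hκ vh
  have hQl := Q_pos hκ vl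
  have hUl := Q_unit hκ hvl
  obtain ⟨htl, hql⟩ := (cond_iff hκ X₀ X hvl hsl).mp hXl
  by_contra hcon
  push_neg at hcon
  obtain ⟨h1, h2⟩ := hcon
  have htb : κ * (X.2 - X₀.2) ≤ sb := le_trans hX (min_le_left _ _)
  have hth : κ * (X.2 - X₀.2) ≤ sh := le_trans hX (min_le_right _ _)
  have hqb : 2 * sb * Qf κ vb * (⟪X.1 - X₀.1, vb⟫ - (X.2 - X₀.2))
      < ‖X.1 - X₀.1‖ ^ 2 - (κ ^ 2 - 1) * (X.2 - X₀.2) ^ 2 := by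
    by_contra hq
    push_neg at hq
    exact absurd ((cond_iff hκ X₀ X hvb hsb).mpr ⟨htb, hq⟩) (not_le.mpr h1)
  have hqh : 2 * sh * Qf κ vh * (⟪X.1 - X₀.1, vh⟫ - (X.2 - X₀.2))
      < ‖X.1 - X₀.1‖ ^ 2 - (κ ^ 2 - 1) * (X.2 - X₀.2) ^ 2 := by
    by_contra hq
    push_neg at hq
    exact absurd ((cond_iff hκ X₀ X hvh hsh).mpr ⟨hth, hq⟩) (not_le.mpr h2)
  set w : E n := X.1 - X₀.1 with hwdef
  set u : ℝ := X.2 - X₀.2 with hudef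
  clear_value w u
  have hPl : (⟪w, vl⟫ : ℝ) = (1 - lam) * ⟪w, vb⟫ + lam * ⟪w, vh⟫ := by
    rw [hvldef, inner_add_right, real_inner_smul_right, real_inner_smul_right]
  rcases le_or_gt (‖w‖ ^ 2 - (κ ^ 2 - 1) * u ^ 2) 0 with hA | hA
  · -- case A ≤ 0 : both P's are negative
    have hPb : (⟪w, vb⟫ : ℝ) - u < 0 := by
      by_contra hp
      push_neg at hp
      linarith [mul_nonneg (mul_pos hsb hQb).le hp, hqb, hA]
    have hPh : (⟪w, vh⟫ : ℝ) - u < 0 := by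
      by_contra hp
      push_neg at hp
      linarith [mul_nonneg (mul_pos hsh hQh).le hp, hqh, hA]
    have hPl0 : (⟪w, vl⟫ : ℝ) - u < 0 := by
      rw [hPl]
      have e1 : (1 - lam) * (⟪w, vb⟫ - u) < 0 := mul_neg_of_pos_of_neg (by linarith) hPb
      have e2 : lam * (⟪w, vh⟫ - u) < 0 := mul_neg_of_pos_of_neg hl0 hPh
      linarith [e1, e2]
    have hstep : ‖w‖ ^ 2 - (κ ^ 2 - 1) * u ^ 2 ≤ 2 * (κ * u) * Qf κ vl * (⟪w, vl⟫ - u) := by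
      have hx : (sl - κ * u) * (Qf κ vl * (⟪w, vl⟫ - u)) ≤ 0 :=
        mul_nonpos_of_nonneg_of_nonpos (by linarith) (mul_neg_of_pos_of_neg hQl hPl0).le
      linarith [hql, hx]
    have hid := key_identity κ w vl u hUl
    have hsum : ‖w - (κ * Qf κ vl * u) • vl‖ ^ 2 + (u * (κ * (κ - Qf κ vl) - 1)) ^ 2 ≤ 0 := by
      linarith [hid, hstep]
    have hz1 : ‖w - (κ * Qf κ vl * u) • vl‖ ^ 2 = 0 :=
      le_antisymm (by linarith [hsum, sq_nonneg (u * (κ * (κ - Qf κ vl) - 1))]) (by positivity)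
    have hz2 : (u * (κ * (κ - Qf κ vl) - 1)) ^ 2 = 0 :=
      le_antisymm (by linarith [hsum, sq_nonneg ‖w - (κ * Qf κ vl * u) • vl‖]) (by positivity)
    have hw : w = (κ * Qf κ vl * u) • vl := by
      have h0 : w - (κ * Qf κ vl * u) • vl = 0 :=
        norm_eq_zero.mp ((pow_eq_zero_iff two_ne_zero).mp hz1)
      exact sub_eq_zero.mp h0
    have hPeq : (⟪w, vl⟫ : ℝ) = κ * Qf κ vl * u * ‖vl‖ ^ 2 := by
      rw [hw, real_inner_smul_left, real_inner_self_eq_norm_sq]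
    have hz2' : u * (κ * (κ - Qf κ vl) - 1) = 0 := (pow_eq_zero_iff two_ne_zero).mp hz2
    rcases mul_eq_zero.mp hz2' with hu | hE
    · rw [hu, mul_zero, zero_mul] at hPeq
      rw [hu] at hPl0
      linarith [hPl0, hPeq]
    · have hE' : κ * (κ - Qf κ vl) = 1 := by linarith
      have h2' : (κ * (Qf κ vl - κ)) ^ 2 = 1 := by
        linear_combination (κ * (κ - Qf κ vl) + 1) * hE'
      have h3 : κ ^ 2 * ((Qf κ vl) ^ 2 * ‖vl‖ ^ 2) = κ ^ 2 - 1 := by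
        linear_combination κ ^ 2 * hUl - h2'
      have h4 : κ * Qf κ vl = κ ^ 2 - 1 := by linear_combination -hE'
      have h5 : (κ ^ 2 - 1) ^ 2 * ‖vl‖ ^ 2 = κ ^ 2 - 1 := by
        linear_combination h3 - ((κ ^ 2 - 1) + κ * Qf κ vl) * ‖vl‖ ^ 2 * h4
      linarith [mul_lt_mul_of_pos_left hvl hk1, h5]
  · -- case A > 0 : use concavity
    have hHb : 0 < sb * Qf κ vb := mul_pos hsb hQb
    have hHh : 0 < sh * Qf κ vh := mul_pos hsh hQh
    have hHl : 0 < sl * Qf κ vl := mul_pos hsl hQl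
    have f1 := mul_lt_mul_of_pos_left hqb
      (mul_pos (mul_pos (sub_pos.2 hl1) hHh) hHl)
    have f2 := mul_lt_mul_of_pos_left hqh
      (mul_pos (mul_pos hl0 hHb) hHl)
    have f3 := mul_le_mul_of_nonneg_left hconc hA.le
    have f4 := mul_le_mul_of_nonneg_left hql (mul_pos hHb hHh).le
    rw [hPl] at f4
    linarith [f1, f2, f3, f4]
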